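/- Let v, w : ℝ⁶ → ℝ be continuously differentiable functions of the variables (t,x,y,z,s,r). Then the following are equivalent: (i) for every λ ∈ ℝ the pair of vector fields X = ∂_z − v∂_s − λ∂_x + λv∂_r and Y = ∂_y − w∂_s − λ∂_t + λw∂_r commutes, i.e. at every point w_z − v w_s − λ w_x + λ v w_r = v_y − w v_s − λ v_t + λ w v_r; (ii) the pair (v,w) solves the system (ma): v_t = w_x + w v_r − v w_r and w_z = v_y + v w_s − w v_s. (Here subscripts denote partial derivatives.) -/
import Mathlib


/-- Partial derivative of `f : ℝⁿ → ℝ` in the `i`-th coordinate direction. -/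
noncomputable def pd {n : ℕ} (i : Fin n) (f : (Fin n → ℝ) → ℝ) (x : Fin n → ℝ) : ℝ :=
  fderiv ℝ f x (Pi.single i 1)

/-- Coordinates on ℝ⁶ are `(t,x,y,z,s,r)` with indices `(0,1,2,3,4,5)`.
For C¹ functions `v, w : ℝ⁶ → ℝ`, the vector fields
`X = ∂_z − v∂_s − λ∂_x + λv∂_r` and `Y = ∂_y − w∂_s − λ∂_t + λw∂_r` commute for every `λ`
iff `(v,w)` solves the system (ma): `v_t = w_x + w v_r − v w_r`, `w_z = v_y + v w_s − w v_s`. -/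
theorem stmt0 (v w : (Fin 6 → ℝ) → ℝ) (hv : ContDiff ℝ 1 v) (hw : ContDiff ℝ 1 w) :
    (∀ (lam : ℝ) (x : Fin 6 → ℝ),
        pd 3 w x - v x * pd 4 w x - lam * pd 1 w x + lam * v x * pd 5 w x =
        pd 2 v x - w x * pd 4 v x - lam * pd 0 v x + lam * w x * pd 5 v x) ↔
    (∀ x : Fin 6 → ℝ,
        pd 0 v x = pd 1 w x + w x * pd 5 v x - v x * pd 5 w x ∧
        pd 3 w x = pd 2 v x + v x * pd 4 w x - w x * pd 4 v x) := by
  constructor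
  · intro h x
    have h0 := h 0 x
    have h1 := h 1 x
    constructor <;> nlinarith [h0, h1]
  · intro h lam x
    obtain ⟨h1, h2⟩ := h x
    linear_combination h2 + lam * h1
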